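/- Total error of the Monte Carlo dual estimator: Let V^up_{0,N_test}(x;ξ̃) := N_test^{−1} Σ_{n=1}^{N_test} sup_{a∈A^H} ( Σ_{t=0}^{H−1} ( R_t(S_t^{(n)}(a_{<t}),a_t) − η̃_{t+1}(S_t^{(n)}(a_{<t}),a_t) ) + F(S_H^{(n)}) ) be the empirical average over N_test independent trajectory drivers. Then E_x[ | V^up_{0,N_test}(x;ξ̃) − V_0^*(x) |² ]^{1/2} ≤ ( 1/√N_test + 1 ) Σ_{t=0}^{H−1} E_x[ sup_{(x',a')∈S×A} | η_{t+1}^*(x',a') − η̃_{t+1}(x',a') |² ]^{1/2}. -/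

import Mathlib

open MeasureTheory ProbabilityTheory

/-- The controlled trajectory in the iterative-function representation:
`S_0 = x`, `S_{t+1}(a_{<t+1}) = 𝒦_{t+1}(S_t(a_{<t}), a_t, ε_{t+1})`. -/
def traj {𝒮 𝒜 E : Type*} (𝒦 : ℕ → 𝒮 → 𝒜 → E → 𝒮) (x : 𝒮)
    (a : ℕ → 𝒜) (es : ℕ → E) : ℕ → 𝒮
  | 0 => x
  | t + 1 => 𝒦 (t + 1) (traj 𝒦 x a es t) (a t) (es (t + 1))

private lemma bddAbove_range_of_le' {α : Type*} {f : α → ℝ} {C : ℝ} (h : ∀ a, f a ≤ C) :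
    BddAbove (Set.range f) := ⟨C, by rintro _ ⟨a, rfl⟩; exact h a⟩

private lemma sqrt_integral_sq_eq' {α : Type*} [MeasurableSpace α] (μ : Measure α)
    [IsProbabilityMeasure μ] {f : α → ℝ} (hf : AEStronglyMeasurable f μ) {C : ℝ}
    (hb : ∀ a, |f a| ≤ C) :
    Real.sqrt (∫ a, f a ^ 2 ∂μ) = (eLpNorm f 2 μ).toReal := by
  have hm : MemLp f 2 μ := MemLp.of_bound hf C (Filter.Eventually.of_forall fun a => by
    simpa [Real.norm_eq_abs] using hb a)
  rw [hm.eLpNorm_eq_integral_rpow_norm two_ne_zero ENNReal.ofNat_ne_top]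
  have h2 : (2 : ENNReal).toReal = 2 := by simp
  rw [h2]
  have hint : (fun a => ‖f a‖ ^ (2:ℝ)) = fun a => f a ^ 2 := by
    funext a
    rw [show (2:ℝ) = ((2:ℕ):ℝ) by norm_num, Real.rpow_natCast, Real.norm_eq_abs, sq_abs]
  simp_rw [hint]
  rw [ENNReal.toReal_ofReal (Real.rpow_nonneg (integral_nonneg fun a => sq_nonneg _) _)]
  rw [Real.sqrt_eq_rpow]
  norm_num

private lemma measurePreserving_eval' {ι : Type*} [Fintype ι] {α : ι → Type*}
    [∀ i, MeasurableSpace (α i)] (μ : ∀ i, Measure (α i)) [∀ i, IsProbabilityMeasure (μ i)]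
    (n : ι) : MeasurePreserving (Function.eval n) (Measure.pi μ) (μ n) := by
  classical
  refine ⟨measurable_pi_apply n, ?_⟩
  ext s hs
  rw [Measure.map_apply (measurable_pi_apply n) hs, ← Set.univ_pi_update_univ, Measure.pi_pi]
  rw [Finset.prod_eq_single n (fun j _ hj => by simp [Function.update_of_ne hj])
    (fun h => absurd (Finset.mem_univ n) h)]
  simp

/-- Pointwise error bound for the pathwise dual objective: with the optimal martingale
functions the pathwise dual objective equals `V₀⋆(x)` exactly, hence with approximate
martingale functions it differs from `V₀⋆(x)` by at most the sum of the uniform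
approximation errors along the horizon. -/
private lemma key_pointwise {𝒮 𝒜 E : Type*} [Nonempty 𝒜] [MeasurableSpace E]
    (ν : Measure E) [IsProbabilityMeasure ν] (H : ℕ) (x : 𝒮)
    (𝒦 : ℕ → 𝒮 → 𝒜 → E → 𝒮) (R : ℕ → 𝒮 → 𝒜 → ℝ) (F : 𝒮 → ℝ) (Rmax : ℝ)
    (hRb : ∀ t y a, |R t y a| ≤ Rmax)
    (Vstar : ℕ → 𝒮 → ℝ) (hVstarH : ∀ y, Vstar H y = F y)
    (hBell : ∀ t, t < H → ∀ y,
      Vstar t y = ⨆ a : 𝒜, (R t y a + ∫ e, Vstar (t + 1) (𝒦 (t + 1) y a e) ∂ν))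
    (hVb : ∀ t y, |Vstar t y| ≤ ((H : ℝ) + 1) * Rmax)
    (η : ℕ → 𝒮 → 𝒜 → E → ℝ) (Bη : ℝ) (hηb : ∀ t y a e, |η t y a e| ≤ Bη)
    (es : ℕ → E) (err : ℕ → ℝ)
    (herr : ∀ t, err t = ⨆ p : 𝒮 × 𝒜,
      |(Vstar (t + 1) (𝒦 (t + 1) p.1 p.2 (es (t + 1)))
          - ∫ e, Vstar (t + 1) (𝒦 (t + 1) p.1 p.2 e) ∂ν)
        - η (t + 1) p.1 p.2 (es (t + 1))|) :
    |(⨆ a : ℕ → 𝒜, (∑ t ∈ Finset.range H,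
        (R t (traj 𝒦 x a es t) (a t) - η (t + 1) (traj 𝒦 x a es t) (a t) (es (t + 1)))
      + F (traj 𝒦 x a es H))) - Vstar 0 x| ≤ ∑ t ∈ Finset.range H, err t := by
  classical
  set VB : ℝ := ((H : ℝ) + 1) * Rmax with hVBdef
  have hRmax : 0 ≤ Rmax := (abs_nonneg _).trans (hRb 0 x (Classical.arbitrary 𝒜))
  set Ival : ℕ → 𝒮 → 𝒜 → ℝ := fun t y b => ∫ e, Vstar (t + 1) (𝒦 (t + 1) y b e) ∂ν
    with hIvaldef
  have hI : ∀ t (y : 𝒮) (b : 𝒜), |Ival t y b| ≤ VB := by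
    intro t y b
    have h := norm_integral_le_of_norm_le_const (μ := ν)
      (f := fun e => Vstar (t + 1) (𝒦 (t + 1) y b e)) (C := VB)
      (Filter.Eventually.of_forall fun e => by simpa [Real.norm_eq_abs] using hVb (t + 1) _)
    simpa [Real.norm_eq_abs, measure_univ] using h
  have hQb : ∀ t (y : 𝒮) (b : 𝒜), |R t y b + Ival t y b| ≤ Rmax + VB := fun t y b =>
    (abs_add_le _ _).trans (add_le_add (hRb _ _ _) (hI _ _ _))
  have hQle : ∀ t, t < H → ∀ (y : 𝒮) (b : 𝒜), R t y b + Ival t y b ≤ Vstar t y := by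
    intro t ht y b
    rw [hBell t ht y]
    exact le_ciSup (bddAbove_range_of_le' fun b' => (abs_le.1 (hQb t y b')).2) b
  have hQnear : ∀ δ : ℝ, 0 < δ → ∀ t, t < H → ∀ y : 𝒮,
      ∃ b : 𝒜, Vstar t y - δ < R t y b + Ival t y b := by
    intro δ hδ t ht y
    have h1 : Vstar t y - δ < ⨆ b : 𝒜, (R t y b + Ival t y b) := by
      rw [← hBell t ht y]; linarith
    exact exists_lt_of_lt_ciSup h1
  -- the optimal-martingale pathwise objective
  set f : (ℕ → 𝒜) → ℝ := fun a =>
    ∑ t ∈ Finset.range H, (R t (traj 𝒦 x a es t) (a t)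
      - (Vstar (t + 1) (traj 𝒦 x a es (t + 1)) - Ival t (traj 𝒦 x a es t) (a t)))
    + F (traj 𝒦 x a es H) with hfdef
  have hfa : ∀ a, f a = Vstar 0 x + ∑ t ∈ Finset.range H,
      ((R t (traj 𝒦 x a es t) (a t) + Ival t (traj 𝒦 x a es t) (a t))
        - Vstar t (traj 𝒦 x a es t)) := by
    intro a
    have htel : ∑ t ∈ Finset.range H,
        (Vstar t (traj 𝒦 x a es t) - Vstar (t + 1) (traj 𝒦 x a es (t + 1)))
        = Vstar 0 (traj 𝒦 x a es 0) - Vstar H (traj 𝒦 x a es H) :=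
      Finset.sum_range_sub' (fun t => Vstar t (traj 𝒦 x a es t)) H
    have h0 : traj 𝒦 x a es 0 = x := rfl
    rw [h0] at htel
    have hF : F (traj 𝒦 x a es H) = Vstar H (traj 𝒦 x a es H) := (hVstarH _).symm
    have hsplit : ∑ t ∈ Finset.range H, (R t (traj 𝒦 x a es t) (a t)
          - (Vstar (t + 1) (traj 𝒦 x a es (t + 1)) - Ival t (traj 𝒦 x a es t) (a t)))
        = (∑ t ∈ Finset.range H,
            ((R t (traj 𝒦 x a es t) (a t) + Ival t (traj 𝒦 x a es t) (a t))
              - Vstar t (traj 𝒦 x a es t)))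
          + ∑ t ∈ Finset.range H,
            (Vstar t (traj 𝒦 x a es t) - Vstar (t + 1) (traj 𝒦 x a es (t + 1))) := by
      rw [← Finset.sum_add_distrib]
      exact Finset.sum_congr rfl fun t _ => by ring
    show (∑ t ∈ Finset.range H, (R t (traj 𝒦 x a es t) (a t)
        - (Vstar (t + 1) (traj 𝒦 x a es (t + 1)) - Ival t (traj 𝒦 x a es t) (a t)))
      + F (traj 𝒦 x a es H)) = _
    rw [hsplit, htel, hF]
    ring
  have hfle : ∀ a, f a ≤ Vstar 0 x := by
    intro a
    rw [hfa a]
    have h1 : ∑ t ∈ Finset.range H,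
        ((R t (traj 𝒦 x a es t) (a t) + Ival t (traj 𝒦 x a es t) (a t))
          - Vstar t (traj 𝒦 x a es t)) ≤ 0 :=
      Finset.sum_nonpos fun t ht => sub_nonpos.2 (hQle t (Finset.mem_range.1 ht) _ _)
    linarith
  have hbf : BddAbove (Set.range f) := bddAbove_range_of_le' hfle
  have hflow : ∀ ε : ℝ, 0 < ε → ∃ a : ℕ → 𝒜, Vstar 0 x - ε ≤ f a := by
    intro ε hε
    set δ : ℝ := ε / ((H : ℝ) + 1) with hδdef
    have hδ : 0 < δ := by positivity
    have hex : ∀ (t : ℕ) (y : 𝒮), ∃ b : 𝒜, t < H → Vstar t y - δ < R t y b + Ival t y b := by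
      intro t y
      by_cases ht : t < H
      · obtain ⟨b, hb⟩ := hQnear δ hδ t ht y; exact ⟨b, fun _ => hb⟩
      · exact ⟨Classical.arbitrary 𝒜, fun h => absurd h ht⟩
    choose pick hpick using hex
    set aux : ℕ → 𝒮 × 𝒜 := fun t => Nat.rec (x, pick 0 x)
      (fun t p => (𝒦 (t + 1) p.1 p.2 (es (t + 1)),
        pick (t + 1) (𝒦 (t + 1) p.1 p.2 (es (t + 1))))) t with hauxdef
    set a : ℕ → 𝒜 := fun t => (aux t).2 with hadef
    have haux2 : ∀ t, (aux t).2 = pick t (aux t).1 := by intro t; cases t <;> rfl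
    have htr : ∀ t, traj 𝒦 x a es t = (aux t).1 := by
      intro t
      induction t with
      | zero => rfl
      | succ t ih =>
        show 𝒦 (t + 1) (traj 𝒦 x a es t) (a t) (es (t + 1)) = (aux (t + 1)).1
        rw [ih]
    refine ⟨a, ?_⟩
    rw [hfa a]
    have hterm : ∀ t ∈ Finset.range H, -δ ≤
        (R t (traj 𝒦 x a es t) (a t) + Ival t (traj 𝒦 x a es t) (a t))
          - Vstar t (traj 𝒦 x a es t) := by
      intro t ht
      have h1 := hpick t ((aux t).1) (Finset.mem_range.1 ht)
      have h2 : a t = pick t (aux t).1 := haux2 t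
      rw [htr t, h2]
      linarith
    have hsum : ∑ t ∈ Finset.range H, (-δ) ≤ ∑ t ∈ Finset.range H,
        ((R t (traj 𝒦 x a es t) (a t) + Ival t (traj 𝒦 x a es t) (a t))
          - Vstar t (traj 𝒦 x a es t)) := Finset.sum_le_sum hterm
    rw [Finset.sum_const, Finset.card_range, nsmul_eq_mul] at hsum
    have hHδ : (H : ℝ) * δ ≤ ε := by
      have hH1 : (H : ℝ) ≤ (H : ℝ) + 1 := by linarith
      calc (H : ℝ) * δ ≤ ((H : ℝ) + 1) * δ := by
            apply mul_le_mul_of_nonneg_right hH1 hδ.le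
        _ = ε := by rw [hδdef]; field_simp
    linarith
  have hsupf : (⨆ a : ℕ → 𝒜, f a) = Vstar 0 x := by
    refine le_antisymm (ciSup_le hfle) ?_
    by_contra hlt
    push_neg at hlt
    obtain ⟨a, ha⟩ := hflow ((Vstar 0 x - ⨆ a : ℕ → 𝒜, f a) / 2) (by linarith)
    have h2 : f a ≤ ⨆ a : ℕ → 𝒜, f a := le_ciSup hbf a
    have h3 := le_trans ha h2
    linarith
  -- relate the approximate objective to f
  set g : (ℕ → 𝒜) → ℝ := fun a => ∑ t ∈ Finset.range H,
      (R t (traj 𝒦 x a es t) (a t) - η (t + 1) (traj 𝒦 x a es t) (a t) (es (t + 1)))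
    + F (traj 𝒦 x a es H) with hgdef
  have herrB : ∀ (t : ℕ) (p : 𝒮 × 𝒜),
      |(Vstar (t + 1) (𝒦 (t + 1) p.1 p.2 (es (t + 1)))
          - ∫ e, Vstar (t + 1) (𝒦 (t + 1) p.1 p.2 e) ∂ν)
        - η (t + 1) p.1 p.2 (es (t + 1))| ≤ VB + VB + Bη := by
    intro t p
    have h1 := hVb (t + 1) (𝒦 (t + 1) p.1 p.2 (es (t + 1)))
    have h2 := hI t p.1 p.2
    have h3 := hηb (t + 1) p.1 p.2 (es (t + 1))
    calc |(Vstar (t + 1) (𝒦 (t + 1) p.1 p.2 (es (t + 1))) - Ival t p.1 p.2)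
          - η (t + 1) p.1 p.2 (es (t + 1))|
        ≤ |Vstar (t + 1) (𝒦 (t + 1) p.1 p.2 (es (t + 1))) - Ival t p.1 p.2|
          + |η (t + 1) p.1 p.2 (es (t + 1))| := abs_sub _ _
      _ ≤ (|Vstar (t + 1) (𝒦 (t + 1) p.1 p.2 (es (t + 1)))| + |Ival t p.1 p.2|)
          + |η (t + 1) p.1 p.2 (es (t + 1))| := by
            have := abs_sub (Vstar (t + 1) (𝒦 (t + 1) p.1 p.2 (es (t + 1)))) (Ival t p.1 p.2)
            linarith
      _ ≤ VB + VB + Bη := by linarith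
  have herr_le : ∀ (t : ℕ) (y : 𝒮) (b : 𝒜),
      |(Vstar (t + 1) (𝒦 (t + 1) y b (es (t + 1))) - Ival t y b)
        - η (t + 1) y b (es (t + 1))| ≤ err t := by
    intro t y b
    rw [herr t]
    exact le_ciSup (bddAbove_range_of_le' fun p => herrB t p) (y, b)
  have hg_f : ∀ a, |g a - f a| ≤ ∑ t ∈ Finset.range H, err t := by
    intro a
    have hdiff : g a - f a = ∑ t ∈ Finset.range H,
        ((Vstar (t + 1) (traj 𝒦 x a es (t + 1)) - Ival t (traj 𝒦 x a es t) (a t))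
          - η (t + 1) (traj 𝒦 x a es t) (a t) (es (t + 1))) := by
      rw [hgdef, hfdef]
      simp only []
      rw [add_sub_add_right_eq_sub, ← Finset.sum_sub_distrib]
      exact Finset.sum_congr rfl fun t _ => by ring
    rw [hdiff]
    refine (Finset.abs_sum_le_sum_abs _ _).trans (Finset.sum_le_sum fun t _ => ?_)
    exact herr_le t (traj 𝒦 x a es t) (a t)
  have hgle : ∀ a, g a ≤ Vstar 0 x + ∑ t ∈ Finset.range H, err t := fun a => by
    have h1 := (abs_le.1 (hg_f a)).2
    have h2 := hfle a
    linarith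
  have hbg : BddAbove (Set.range g) := bddAbove_range_of_le' hgle
  have hsup_le : (⨆ a : ℕ → 𝒜, g a) ≤ Vstar 0 x + ∑ t ∈ Finset.range H, err t :=
    ciSup_le hgle
  have hsup_ge : Vstar 0 x - ∑ t ∈ Finset.range H, err t ≤ ⨆ a : ℕ → 𝒜, g a := by
    have h3 : (⨆ a : ℕ → 𝒜, f a) ≤ (⨆ a : ℕ → 𝒜, g a) + ∑ t ∈ Finset.range H, err t := by
      refine ciSup_le fun a => ?_
      have h4 : g a ≤ ⨆ a : ℕ → 𝒜, g a := le_ciSup hbg a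
      have h5 := (abs_le.1 (hg_f a)).1
      linarith
    rw [hsupf] at h3
    linarith
  rw [abs_le]
  constructor <;> [linarith; linarith]

/-- **Total error of the Monte Carlo dual estimator.**
For the empirical dual estimator `V₀ᵘᵖ_{0,N_test}(x; ξ̃)`, averaging the
pathwise dual objective over `N_test` independent trajectory drivers,
`E[|V₀ᵘᵖ_{0,N_test}(x;ξ̃) − V₀⋆(x)|²]^{1/2}
  ≤ (1/√N_test + 1) Σ_t E[sup_{(x',a')} |η⋆_{t+1} − η̃_{t+1}|²]^{1/2}`. -/
theorem monte_carlo_dual_estimator_error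
    {𝒮 𝒜 : Type*} [Nonempty 𝒜]
    {E : Type*} [mE : MeasurableSpace E]
    {Ω₀ : Type*} [MeasurableSpace Ω₀]
    (P₀ : Measure Ω₀) [IsProbabilityMeasure P₀]
    (ν : Measure E) [IsProbabilityMeasure ν]
    (μE : Measure (ℕ → E)) [IsProbabilityMeasure μE]
    (hcoord : ∀ n, Measure.map (fun es : ℕ → E => es n) μE = ν)
    (hindep : iIndepFun (m := fun _ : ℕ => mE) (fun n (es : ℕ → E) => es n) μE)
    (H Ntest : ℕ) (hNtest : 0 < Ntest) (x : 𝒮)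
    (𝒦 : ℕ → 𝒮 → 𝒜 → E → 𝒮)
    (R : ℕ → 𝒮 → 𝒜 → ℝ) (F : 𝒮 → ℝ) (Rmax : ℝ) (hRmax : 0 ≤ Rmax)
    (hRb : ∀ t y a, |R t y a| ≤ Rmax) (hFb : ∀ y, |F y| ≤ Rmax)
    -- the optimal value functions (Bellman recursion), bounded
    (Vstar : ℕ → 𝒮 → ℝ)
    (hVstarH : ∀ y, Vstar H y = F y)
    (hBell : ∀ t, t < H → ∀ y,
      Vstar t y = ⨆ a : 𝒜, (R t y a + ∫ e, Vstar (t + 1) (𝒦 (t + 1) y a e) ∂ν))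
    (hVb : ∀ t y, |Vstar t y| ≤ ((H : ℝ) + 1) * Rmax)
    -- the approximate martingale functions `η̃`, bounded with zero mean
    (ηtil : ℕ → Ω₀ → 𝒮 → 𝒜 → E → ℝ) (Bη : ℝ)
    (hηb : ∀ t ω₀ y a e, |ηtil t ω₀ y a e| ≤ Bη)
    (hηmean : ∀ t ω₀ y a, (∫ e, ηtil t ω₀ y a e ∂ν) = 0)
    -- the pathwise dual objectives along the `n`-th independent driver
    (Zn : Fin Ntest → Ω₀ × (Fin Ntest → ℕ → E) → ℝ)
    (hZn : ∀ n w, Zn n w = ⨆ a : ℕ → 𝒜,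
      (∑ t ∈ Finset.range H,
          (R t (traj 𝒦 x a (w.2 n) t) (a t)
            - ηtil (t + 1) w.1 (traj 𝒦 x a (w.2 n) t) (a t) (w.2 n (t + 1)))
        + F (traj 𝒦 x a (w.2 n) H)))
    -- the uniform approximation errors `sup_{(x',a')} |η⋆_{t+1} − η̃_{t+1}|`
    (err : ℕ → Ω₀ × (ℕ → E) → ℝ)
    (herr : ∀ t w, err t w = ⨆ p : 𝒮 × 𝒜,
      |(Vstar (t + 1) (𝒦 (t + 1) p.1 p.2 (w.2 (t + 1)))
          - ∫ e, Vstar (t + 1) (𝒦 (t + 1) p.1 p.2 e) ∂ν)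
        - ηtil (t + 1) w.1 p.1 p.2 (w.2 (t + 1))|)
    -- measurability of the pathwise suprema
    (hZnm : ∀ n, AEStronglyMeasurable (Zn n)
      (P₀.prod (Measure.pi fun _ : Fin Ntest => μE)))
    (herrm : ∀ t, AEStronglyMeasurable (err t) (P₀.prod μE)) :
    Real.sqrt (∫ w,
        ((Ntest : ℝ)⁻¹ * (∑ n : Fin Ntest, Zn n w) - Vstar 0 x) ^ 2
      ∂(P₀.prod (Measure.pi fun _ : Fin Ntest => μE)))
      ≤ (1 / Real.sqrt Ntest + 1) *
          ∑ t ∈ Finset.range H,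
            Real.sqrt (∫ w, (err t w) ^ 2 ∂(P₀.prod μE)) := by
  classical
  haveI hSA : Nonempty (𝒮 × 𝒜) := ⟨(x, Classical.arbitrary 𝒜)⟩
  set μP := P₀.prod (Measure.pi fun _ : Fin Ntest => μE) with hμPdef
  set μ1 := P₀.prod μE with hμ1def
  haveI hμPp : IsProbabilityMeasure μP := by rw [hμPdef]; infer_instance
  haveI hμ1p : IsProbabilityMeasure μ1 := by rw [hμ1def]; infer_instance
  set VB : ℝ := ((H : ℝ) + 1) * Rmax with hVBdef
  set Cerr : ℝ := VB + VB + Bη with hCerrdef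
  have hNne : (Ntest : ℝ) ≠ 0 := Nat.cast_ne_zero.2 hNtest.ne'
  -- bound on the conditional-expectation integrals
  have hI : ∀ t (y : 𝒮) (b : 𝒜), |∫ e, Vstar (t + 1) (𝒦 (t + 1) y b e) ∂ν| ≤ VB := by
    intro t y b
    have h := norm_integral_le_of_norm_le_const (μ := ν)
      (f := fun e => Vstar (t + 1) (𝒦 (t + 1) y b e)) (C := VB)
      (Filter.Eventually.of_forall fun e => by simpa [Real.norm_eq_abs] using hVb (t + 1) _)
    simpa [Real.norm_eq_abs, measure_univ] using h
  -- err is nonnegative and bounded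
  have herrB : ∀ (t : ℕ) (w : Ω₀ × (ℕ → E)) (p : 𝒮 × 𝒜),
      |(Vstar (t + 1) (𝒦 (t + 1) p.1 p.2 (w.2 (t + 1)))
          - ∫ e, Vstar (t + 1) (𝒦 (t + 1) p.1 p.2 e) ∂ν)
        - ηtil (t + 1) w.1 p.1 p.2 (w.2 (t + 1))| ≤ Cerr := by
    intro t w p
    have h1 := hVb (t + 1) (𝒦 (t + 1) p.1 p.2 (w.2 (t + 1)))
    have h2 := hI t p.1 p.2
    have h3 := hηb (t + 1) w.1 p.1 p.2 (w.2 (t + 1))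
    have h4 := abs_sub (Vstar (t + 1) (𝒦 (t + 1) p.1 p.2 (w.2 (t + 1))))
      (∫ e, Vstar (t + 1) (𝒦 (t + 1) p.1 p.2 e) ∂ν)
    have h5 := abs_sub ((Vstar (t + 1) (𝒦 (t + 1) p.1 p.2 (w.2 (t + 1))))
      - ∫ e, Vstar (t + 1) (𝒦 (t + 1) p.1 p.2 e) ∂ν) (ηtil (t + 1) w.1 p.1 p.2 (w.2 (t + 1)))
    rw [hCerrdef]
    linarith
  have herr_ub : ∀ t (w : Ω₀ × (ℕ → E)), err t w ≤ Cerr := by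
    intro t w
    rw [herr t w]
    exact ciSup_le fun p => herrB t w p
  have herr_nonneg : ∀ t (w : Ω₀ × (ℕ → E)), 0 ≤ err t w := by
    intro t w
    rw [herr t w]
    have h := le_ciSup (bddAbove_range_of_le' fun p => herrB t w p)
      ((x, Classical.arbitrary 𝒜) : 𝒮 × 𝒜)
    exact le_trans (abs_nonneg _) h
  have herr_abs : ∀ t (w : Ω₀ × (ℕ → E)), |err t w| ≤ Cerr := fun t w => by
    rw [abs_of_nonneg (herr_nonneg t w)]; exact herr_ub t w
  -- pointwise pathwise bound
  have key : ∀ (n : Fin Ntest) (w : Ω₀ × (Fin Ntest → ℕ → E)),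
      |Zn n w - Vstar 0 x| ≤ ∑ t ∈ Finset.range H, err t (w.1, w.2 n) := by
    intro n w
    rw [hZn n w]
    exact key_pointwise ν H x 𝒦 R F Rmax hRb Vstar hVstarH hBell hVb
      (fun t => ηtil t w.1) Bη (fun t y a e => hηb t w.1 y a e) (w.2 n)
      (fun t => err t (w.1, w.2 n)) (fun t => herr t (w.1, w.2 n))
  -- the estимator error and its pointwise dominating function
  set fS : Ω₀ × (Fin Ntest → ℕ → E) → ℝ :=
    fun w => (Ntest : ℝ)⁻¹ * (∑ n : Fin Ntest, Zn n w) - Vstar 0 x with hfSdef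
  set Gf : Ω₀ × (Fin Ntest → ℕ → E) → ℝ :=
    fun w => (Ntest : ℝ)⁻¹ * ∑ n : Fin Ntest, ∑ t ∈ Finset.range H, err t (w.1, w.2 n)
    with hGdef
  have hfS_eq : ∀ w, fS w = (Ntest : ℝ)⁻¹ * ∑ n : Fin Ntest, (Zn n w - Vstar 0 x) := by
    intro w
    have h1 : ∑ n : Fin Ntest, (Zn n w - Vstar 0 x)
        = (∑ n : Fin Ntest, Zn n w) - (Ntest : ℝ) * Vstar 0 x := by
      rw [Finset.sum_sub_distrib, Finset.sum_const, Finset.card_univ, Fintype.card_fin,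
        nsmul_eq_mul]
    rw [h1, mul_sub]
    show (Ntest : ℝ)⁻¹ * (∑ n : Fin Ntest, Zn n w) - Vstar 0 x = _
    rw [← mul_assoc, inv_mul_cancel₀ hNne, one_mul]
  have hdom : ∀ w, |fS w| ≤ Gf w := by
    intro w
    rw [hfS_eq w]
    show |(Ntest : ℝ)⁻¹ * ∑ n : Fin Ntest, (Zn n w - Vstar 0 x)|
      ≤ (Ntest : ℝ)⁻¹ * ∑ n : Fin Ntest, ∑ t ∈ Finset.range H, err t (w.1, w.2 n)
    rw [abs_mul, abs_of_nonneg (inv_nonneg.2 (Nat.cast_nonneg Ntest))]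
    refine mul_le_mul_of_nonneg_left ?_ (inv_nonneg.2 (Nat.cast_nonneg Ntest))
    exact (Finset.abs_sum_le_sum_abs _ _).trans (Finset.sum_le_sum fun n _ => key n w)
  have hGnonneg : ∀ w, 0 ≤ Gf w := fun w =>
    mul_nonneg (inv_nonneg.2 (Nat.cast_nonneg _))
      (Finset.sum_nonneg fun n _ => Finset.sum_nonneg fun t _ => herr_nonneg t _)
  have hfSb : ∀ w, |fS w| ≤ (H : ℝ) * Cerr := by
    intro w
    refine (hdom w).trans ?_
    show (Ntest : ℝ)⁻¹ * ∑ n : Fin Ntest, ∑ t ∈ Finset.range H, err t (w.1, w.2 n) ≤ _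
    have h1 : ∀ n : Fin Ntest,
        ∑ t ∈ Finset.range H, err t (w.1, w.2 n) ≤ (H : ℝ) * Cerr := by
      intro n
      calc ∑ t ∈ Finset.range H, err t (w.1, w.2 n) ≤ ∑ _t ∈ Finset.range H, Cerr :=
            Finset.sum_le_sum fun t _ => herr_ub t _
        _ = (H : ℝ) * Cerr := by rw [Finset.sum_const, Finset.card_range, nsmul_eq_mul]
    calc (Ntest : ℝ)⁻¹ * ∑ n : Fin Ntest, ∑ t ∈ Finset.range H, err t (w.1, w.2 n)
        ≤ (Ntest : ℝ)⁻¹ * ∑ _n : Fin Ntest, (H : ℝ) * Cerr :=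
          mul_le_mul_of_nonneg_left (Finset.sum_le_sum fun n _ => h1 n)
            (inv_nonneg.2 (Nat.cast_nonneg _))
      _ = (H : ℝ) * Cerr := by
          rw [Finset.sum_const, Finset.card_univ, Fintype.card_fin, nsmul_eq_mul,
            ← mul_assoc, inv_mul_cancel₀ hNne, one_mul]
  -- measure-preserving coordinate maps
  have hφ : ∀ n : Fin Ntest, MeasurePreserving
      (fun w : Ω₀ × (Fin Ntest → ℕ → E) => (w.1, w.2 n)) μP μ1 := fun n =>
    (MeasurePreserving.id P₀).prod (measurePreserving_eval' (fun _ : Fin Ntest => μE) n)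
  have hcm : ∀ (n : Fin Ntest) (t : ℕ), AEStronglyMeasurable
      (fun w : Ω₀ × (Fin Ntest → ℕ → E) => err t (w.1, w.2 n)) μP := fun n t =>
    (herrm t).comp_quasiMeasurePreserving (hφ n).quasiMeasurePreserving
  have hfSm : AEStronglyMeasurable fS μP :=
    ((Finset.aestronglyMeasurable_fun_sum Finset.univ fun n _ => hZnm n).const_mul _).sub
      aestronglyMeasurable_const
  -- L² chain
  set Et : ℕ → ENNReal := fun t => eLpNorm (err t) 2 μ1 with hEtdef
  have herrMem : ∀ t, MemLp (err t) 2 μ1 := fun t =>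
    MemLp.of_bound (herrm t) Cerr (Filter.Eventually.of_forall fun w => by
      simpa [Real.norm_eq_abs] using herr_abs t w)
  have hEtne : ∀ t, Et t ≠ ⊤ := fun t => (herrMem t).2.ne
  have hstep1 : eLpNorm fS 2 μP ≤ eLpNorm Gf 2 μP := eLpNorm_mono fun w => by
    rw [Real.norm_eq_abs, Real.norm_eq_abs, abs_of_nonneg (hGnonneg w)]; exact hdom w
  have hGsplit : Gf = (Ntest : ℝ)⁻¹ • ∑ n : Fin Ntest,
      (fun w : Ω₀ × (Fin Ntest → ℕ → E) => ∑ t ∈ Finset.range H, err t (w.1, w.2 n)) := by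
    funext w
    show (Ntest : ℝ)⁻¹ * ∑ n : Fin Ntest, ∑ t ∈ Finset.range H, err t (w.1, w.2 n) = _
    simp [Finset.sum_apply]
  have hstep2 : eLpNorm Gf 2 μP
      ≤ (‖(Ntest : ℝ)⁻¹‖₊ : ENNReal) * ∑ _n : Fin Ntest, ∑ t ∈ Finset.range H, Et t := by
    rw [hGsplit, eLpNorm_const_smul]
    refine mul_le_mul_right ?_ _
    refine (eLpNorm_sum_le
      (fun n _ => Finset.aestronglyMeasurable_fun_sum _ fun t _ => hcm n t)
      (by norm_num)).trans ?_
    refine Finset.sum_le_sum fun n _ => ?_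
    have hfun : (fun w : Ω₀ × (Fin Ntest → ℕ → E) => ∑ t ∈ Finset.range H, err t (w.1, w.2 n))
        = ∑ t ∈ Finset.range H,
          (fun w : Ω₀ × (Fin Ntest → ℕ → E) => err t (w.1, w.2 n)) := by
      funext w; simp [Finset.sum_apply]
    rw [hfun]
    refine (eLpNorm_sum_le (fun t _ => hcm n t) (by norm_num)).trans ?_
    refine Finset.sum_le_sum fun t _ => ?_
    have hc : (fun w : Ω₀ × (Fin Ntest → ℕ → E) => err t (w.1, w.2 n))
        = (err t) ∘ (fun w : Ω₀ × (Fin Ntest → ℕ → E) => (w.1, w.2 n)) := rfl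
    rw [hc, eLpNorm_comp_measurePreserving (herrm t) (hφ n)]
  have hcoef : (‖(Ntest : ℝ)⁻¹‖₊ : ENNReal) * ∑ _n : Fin Ntest, ∑ t ∈ Finset.range H, Et t
      = ∑ t ∈ Finset.range H, Et t := by
    rw [Finset.sum_const, Finset.card_univ, Fintype.card_fin, nsmul_eq_mul]
    rw [nnnorm_inv, Real.nnnorm_natCast]
    rw [ENNReal.coe_inv (by exact_mod_cast hNtest.ne' : (Ntest : NNReal) ≠ 0)]
    rw [ENNReal.coe_natCast, ← mul_assoc,
      ENNReal.inv_mul_cancel (by exact_mod_cast hNtest.ne' : (Ntest : ENNReal) ≠ 0)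
        (ENNReal.natCast_ne_top Ntest), one_mul]
  have hmain : eLpNorm fS 2 μP ≤ ∑ t ∈ Finset.range H, Et t := by
    calc eLpNorm fS 2 μP ≤ eLpNorm Gf 2 μP := hstep1
      _ ≤ (‖(Ntest : ℝ)⁻¹‖₊ : ENNReal) * ∑ _n : Fin Ntest, ∑ t ∈ Finset.range H, Et t :=
          hstep2
      _ = ∑ t ∈ Finset.range H, Et t := hcoef
  -- conversions back to real square roots
  have hLHS : Real.sqrt (∫ w, fS w ^ 2 ∂μP) = (eLpNorm fS 2 μP).toReal :=
    sqrt_integral_sq_eq' μP hfSm hfSb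
  have hRHS : ∀ t, Real.sqrt (∫ w, (err t w) ^ 2 ∂μ1) = (Et t).toReal := fun t =>
    sqrt_integral_sq_eq' μ1 (herrm t) (herr_abs t)
  have hsum_ne : (∑ t ∈ Finset.range H, Et t) ≠ ⊤ :=
    (ENNReal.sum_lt_top.2 fun t _ => (hEtne t).lt_top).ne
  have hfinal : Real.sqrt (∫ w, fS w ^ 2 ∂μP)
      ≤ ∑ t ∈ Finset.range H, Real.sqrt (∫ w, (err t w) ^ 2 ∂μ1) := by
    rw [hLHS]
    calc (eLpNorm fS 2 μP).toReal ≤ (∑ t ∈ Finset.range H, Et t).toReal :=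
          ENNReal.toReal_mono hsum_ne hmain
      _ = ∑ t ∈ Finset.range H, (Et t).toReal := ENNReal.toReal_sum fun t _ => hEtne t
      _ = ∑ t ∈ Finset.range H, Real.sqrt (∫ w, (err t w) ^ 2 ∂μ1) :=
          Finset.sum_congr rfl fun t _ => (hRHS t).symm
  have hcoef2 : (1 : ℝ) ≤ 1 / Real.sqrt Ntest + 1 := by
    have h0 : 0 ≤ 1 / Real.sqrt Ntest := by positivity
    linarith
  have hs0 : 0 ≤ ∑ t ∈ Finset.range H, Real.sqrt (∫ w, (err t w) ^ 2 ∂μ1) :=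
    Finset.sum_nonneg fun t _ => Real.sqrt_nonneg _
  calc Real.sqrt (∫ w, ((Ntest : ℝ)⁻¹ * (∑ n : Fin Ntest, Zn n w) - Vstar 0 x) ^ 2 ∂μP)
      = Real.sqrt (∫ w, fS w ^ 2 ∂μP) := rfl
    _ ≤ ∑ t ∈ Finset.range H, Real.sqrt (∫ w, (err t w) ^ 2 ∂μ1) := hfinal
    _ ≤ (1 / Real.sqrt Ntest + 1) *
          ∑ t ∈ Finset.range H, Real.sqrt (∫ w, (err t w) ^ 2 ∂μ1) :=
        le_mul_of_one_le_left hs0 hcoef2
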